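/- Suppose Γ ⊂ ℝ_{>0}^2 is a compact connected component of the zero set of an m-nomial f, consisting of regular points of f, and p ∈ Int(Γ). Then for every nonzero u ∈ ℝ^2 the curve t ↦ h_{(p,u)}(t) parametrizing {x ∈ ℝ_{>0}^2 : x^u = p^u} meets Γ at parameter values on both sides of the parameter of p. -/
import Mathlib

lemma cross_aux (Q Γ : Set (ℝ × ℝ)) (p : ℝ × ℝ)
    (cc : ℝ → ℝ × ℝ) (a b : ℝ)
    (hc : ContinuousOn cc (Set.Icc a b))
    (hcQ : ∀ t ∈ Set.Icc a b, cc t ∈ Q)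
    (e : ℝ) (he : e ∈ Set.Icc a b) (hce : cc e = p)
    (e' : ℝ) (he' : e' ∈ Set.Icc a b)
    (hce' : cc e' ∉ connectedComponentIn (Q \ Γ) p) :
    ∃ t ∈ Set.Icc a b, cc t ∈ Γ := by
  by_contra h
  push_neg at h
  have himg : cc '' Set.Icc a b ⊆ Q \ Γ := by
    rintro x ⟨t, ht, rfl⟩
    exact ⟨hcQ t ht, h t ht⟩
  have hconn : IsPreconnected (cc '' Set.Icc a b) :=
    (isPreconnected_Icc).image cc hc
  have hpmem : p ∈ cc '' Set.Icc a b := ⟨e, he, hce⟩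
  have := hconn.subset_connectedComponentIn hpmem himg
  exact hce' (this ⟨e', he', rfl⟩)

/-- Points of the bounded component have a first coordinate attained on `Γ`. -/
lemma line_fst (Γ : Set (ℝ × ℝ)) (p : ℝ × ℝ)
    (hint : Bornology.IsBounded
      (connectedComponentIn ({x : ℝ × ℝ | 0 < x.1 ∧ 0 < x.2} \ Γ) p))
    (q : ℝ × ℝ)
    (hq : q ∈ connectedComponentIn ({x : ℝ × ℝ | 0 < x.1 ∧ 0 < x.2} \ Γ) p) :
    ∃ x ∈ Γ, x.1 = q.1 := by
  set Q : Set (ℝ × ℝ) := {x | 0 < x.1 ∧ 0 < x.2} with hQ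
  by_contra h
  push_neg at h
  have hqQ : q ∈ Q \ Γ := connectedComponentIn_subset _ _ hq
  have hL : ((fun t => (q.1, t)) '' Set.Ioi (0 : ℝ)) ⊆ Q \ Γ := by
    rintro x ⟨t, ht, rfl⟩
    exact ⟨⟨hqQ.1.1, ht⟩, fun hmem => h _ hmem rfl⟩
  have hLconn : IsPreconnected ((fun t => (q.1, t)) '' Set.Ioi (0 : ℝ)) :=
    (isPreconnected_Ioi).image _ ((continuous_const.prodMk continuous_id).continuousOn)
  have hqL : q ∈ (fun t => (q.1, t)) '' Set.Ioi (0 : ℝ) := ⟨q.2, hqQ.1.2, rfl⟩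
  have hsub : ((fun t => (q.1, t)) '' Set.Ioi (0 : ℝ)) ⊆ connectedComponentIn (Q \ Γ) q :=
    hLconn.subset_connectedComponentIn hqL hL
  have heq : connectedComponentIn (Q \ Γ) q = connectedComponentIn (Q \ Γ) p :=
    ((connectedComponentIn_eq hq)).symm
  have hbdd : Bornology.IsBounded ((fun t => (q.1, t)) '' Set.Ioi (0 : ℝ)) :=
    hint.subset (by rw [← heq]; exact hsub)
  obtain ⟨C, hC⟩ := (isBounded_iff_forall_norm_le).1 hbdd
  have hmem : (q.1, max C 0 + 1) ∈ (fun t => (q.1, t)) '' Set.Ioi (0 : ℝ) :=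
    ⟨max C 0 + 1, Set.mem_Ioi.mpr (by positivity), rfl⟩
  have h1 := hC _ hmem
  have h2 : ‖max C 0 + 1‖ ≤ ‖(q.1, max C 0 + 1)‖ := norm_snd_le (q.1, max C 0 + 1)
  rw [Real.norm_eq_abs, abs_of_pos (by positivity)] at h2
  have : C ≤ max C 0 := le_max_left _ _
  linarith

lemma line_snd (Γ : Set (ℝ × ℝ)) (p : ℝ × ℝ)
    (hint : Bornology.IsBounded
      (connectedComponentIn ({x : ℝ × ℝ | 0 < x.1 ∧ 0 < x.2} \ Γ) p))
    (q : ℝ × ℝ)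
    (hq : q ∈ connectedComponentIn ({x : ℝ × ℝ | 0 < x.1 ∧ 0 < x.2} \ Γ) p) :
    ∃ x ∈ Γ, x.2 = q.2 := by
  set Q : Set (ℝ × ℝ) := {x | 0 < x.1 ∧ 0 < x.2} with hQ
  by_contra h
  push_neg at h
  have hqQ : q ∈ Q \ Γ := connectedComponentIn_subset _ _ hq
  have hL : ((fun t => (t, q.2)) '' Set.Ioi (0 : ℝ)) ⊆ Q \ Γ := by
    rintro x ⟨t, ht, rfl⟩
    exact ⟨⟨ht, hqQ.1.2⟩, fun hmem => h _ hmem rfl⟩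
  have hLconn : IsPreconnected ((fun t => (t, q.2)) '' Set.Ioi (0 : ℝ)) :=
    (isPreconnected_Ioi).image _ ((continuous_id.prodMk continuous_const).continuousOn)
  have hqL : q ∈ (fun t => (t, q.2)) '' Set.Ioi (0 : ℝ) := ⟨q.1, hqQ.1.1, rfl⟩
  have hsub : ((fun t => (t, q.2)) '' Set.Ioi (0 : ℝ)) ⊆ connectedComponentIn (Q \ Γ) q :=
    hLconn.subset_connectedComponentIn hqL hL
  have heq : connectedComponentIn (Q \ Γ) q = connectedComponentIn (Q \ Γ) p :=
    ((connectedComponentIn_eq hq)).symm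
  have hbdd : Bornology.IsBounded ((fun t => (t, q.2)) '' Set.Ioi (0 : ℝ)) :=
    hint.subset (by rw [← heq]; exact hsub)
  obtain ⟨C, hC⟩ := (isBounded_iff_forall_norm_le).1 hbdd
  have hmem : (max C 0 + 1, q.2) ∈ (fun t => (t, q.2)) '' Set.Ioi (0 : ℝ) :=
    ⟨max C 0 + 1, Set.mem_Ioi.mpr (by positivity), rfl⟩
  have h1 := hC _ hmem
  have h2 : ‖max C 0 + 1‖ ≤ ‖(max C 0 + 1, q.2)‖ := norm_fst_le (max C 0 + 1, q.2)
  rw [Real.norm_eq_abs, abs_of_pos (by positivity)] at h2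
  have : C ≤ max C 0 := le_max_left _ _
  linarith

theorem curve_through_interior_meets_compact_component (m : ℕ)
    (c : Fin m → ℝ) (a : Fin m → ℝ × ℝ)
    (hc : ∀ i, c i ≠ 0) (ha : Function.Injective a)
    (f : ℝ × ℝ → ℝ)
    (hf : ∀ x : ℝ × ℝ, f x = ∑ i, c i * (x.1 ^ (a i).1 * x.2 ^ (a i).2))
    (Z : Set (ℝ × ℝ)) (hZ : Z = {x : ℝ × ℝ | 0 < x.1 ∧ 0 < x.2 ∧ f x = 0})
    (Γ : Set (ℝ × ℝ)) (z : ℝ × ℝ) (hz : z ∈ Z)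
    (hΓ : Γ = connectedComponentIn Z z) (hΓc : IsCompact Γ)
    (hreg : ∀ q ∈ Γ, fderiv ℝ f q ≠ 0)
    (p : ℝ × ℝ) (hp : 0 < p.1 ∧ 0 < p.2) (hpΓ : p ∉ Γ)
    -- `p` lies in the bounded component of the complement of `Γ` in the
    -- positive quadrant, i.e. in `Int(Γ)`:
    (hint : Bornology.IsBounded
      (connectedComponentIn ({x : ℝ × ℝ | 0 < x.1 ∧ 0 < x.2} \ Γ) p))
    (u : ℝ × ℝ) (hu : u ≠ 0) :
    (u.2 ≠ 0 → ∃ s₁ s₂ : ℝ, 0 < s₁ ∧ s₁ < p.1 ∧ p.1 < s₂ ∧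
      (s₁, (p.1 ^ u.1 * p.2 ^ u.2) ^ (1 / u.2) * s₁ ^ (-u.1 / u.2)) ∈ Γ ∧
      (s₂, (p.1 ^ u.1 * p.2 ^ u.2) ^ (1 / u.2) * s₂ ^ (-u.1 / u.2)) ∈ Γ) ∧
    (u.2 = 0 → ∃ s₁ s₂ : ℝ, 0 < s₁ ∧ s₁ < p.2 ∧ p.2 < s₂ ∧
      (p.1, s₁) ∈ Γ ∧ (p.1, s₂) ∈ Γ) := by
  set Q : Set (ℝ × ℝ) := {x : ℝ × ℝ | 0 < x.1 ∧ 0 < x.2} with hQ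
  have hΓne : Γ.Nonempty := ⟨z, by rw [hΓ]; exact mem_connectedComponentIn hz⟩
  have hΓQ : Γ ⊆ Q := by
    rw [hΓ, hZ]
    exact fun x hx => by
      have := connectedComponentIn_subset {x : ℝ × ℝ | 0 < x.1 ∧ 0 < x.2 ∧ f x = 0} z hx
      exact ⟨this.1, this.2.1⟩
  have hpQΓ : p ∈ Q \ Γ := ⟨⟨hp.1, hp.2⟩, hpΓ⟩
  -- extremal points on Γ
  obtain ⟨w₁, hw₁Γ, hw₁⟩ := hΓc.exists_isMinOn hΓne continuous_fst.continuousOn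
  obtain ⟨w₂, hw₂Γ, hw₂⟩ := hΓc.exists_isMaxOn hΓne continuous_fst.continuousOn
  obtain ⟨w₃, hw₃Γ, hw₃⟩ := hΓc.exists_isMinOn hΓne continuous_snd.continuousOn
  obtain ⟨w₄, hw₄Γ, hw₄⟩ := hΓc.exists_isMaxOn hΓne continuous_snd.continuousOn
  have hw₁pos : 0 < w₁.1 := (hΓQ hw₁Γ).1
  have hw₃pos : 0 < w₃.2 := (hΓQ hw₃Γ).2
  constructor
  · -- case u.2 ≠ 0
    intro hu2
    set K : ℝ := (p.1 ^ u.1 * p.2 ^ u.2) ^ (1 / u.2) with hK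
    set β : ℝ := -u.1 / u.2 with hβ
    have hKpos : 0 < K :=
      Real.rpow_pos_of_pos
        (mul_pos (Real.rpow_pos_of_pos hp.1 _) (Real.rpow_pos_of_pos hp.2 _)) _
    set cc : ℝ → ℝ × ℝ := fun t => (t, K * t ^ β) with hcc
    have hval : K * p.1 ^ β = p.2 := by
      rw [hK, hβ,
        Real.mul_rpow (Real.rpow_pos_of_pos hp.1 u.1).le (Real.rpow_pos_of_pos hp.2 u.2).le,
        ← Real.rpow_mul hp.1.le, ← Real.rpow_mul hp.2.le, mul_one_div, mul_one_div,
        div_self hu2, Real.rpow_one, neg_div, mul_comm (p.1 ^ (u.1 / u.2)) p.2, mul_assoc,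
        ← Real.rpow_add hp.1, add_neg_cancel, Real.rpow_zero, mul_one]
    have hcp : cc p.1 = p := by
      rw [hcc]; ext
      · rfl
      · exact hval
    have hccont : ∀ a b : ℝ, 0 < a → ContinuousOn cc (Set.Icc a b) := by
      intro a' b' ha'
      apply ContinuousOn.prodMk continuousOn_id
      exact continuousOn_const.mul (ContinuousOn.rpow_const continuousOn_id
        (fun t ht => Or.inl (ne_of_gt (lt_of_lt_of_le ha' ht.1))))
    have hccQ : ∀ a b : ℝ, 0 < a → ∀ t ∈ Set.Icc a b, cc t ∈ Q := by
      intro a' b' ha' t ht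
      exact ⟨lt_of_lt_of_le ha' ht.1, mul_pos hKpos
        (Real.rpow_pos_of_pos (lt_of_lt_of_le ha' ht.1) _)⟩
    -- left crossing
    have cross1 : ∃ t ∈ Set.Icc (min (p.1 / 2) (w₁.1 / 2)) p.1, cc t ∈ Γ := by
      have hapos : 0 < min (p.1 / 2) (w₁.1 / 2) := lt_min (by linarith) (by linarith)
      have hab : min (p.1 / 2) (w₁.1 / 2) ≤ p.1 :=
        le_trans (min_le_left _ _) (by linarith)
      refine cross_aux Q Γ p cc _ _ (hccont _ _ hapos) (hccQ _ _ hapos)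
        p.1 ⟨hab, le_rfl⟩ hcp (min (p.1 / 2) (w₁.1 / 2)) ⟨le_rfl, hab⟩ ?_
      intro hmem
      obtain ⟨x, hxΓ, hx⟩ := line_fst Γ p hint _ hmem
      have h1 : w₁.1 ≤ x.1 := hw₁ hxΓ
      have h2 : min (p.1 / 2) (w₁.1 / 2) ≤ w₁.1 / 2 := min_le_right _ _
      simp only [hcc] at hx
      rw [hx] at h1
      linarith
    -- right crossing
    have cross2 : ∃ t ∈ Set.Icc p.1 (max p.1 w₂.1 + 1), cc t ∈ Γ := by
      have hab : p.1 ≤ max p.1 w₂.1 + 1 := le_trans (le_max_left _ _) (by linarith)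
      refine cross_aux Q Γ p cc _ _ (hccont _ _ hp.1) (hccQ _ _ hp.1)
        p.1 ⟨le_rfl, hab⟩ hcp (max p.1 w₂.1 + 1) ⟨hab, le_rfl⟩ ?_
      intro hmem
      obtain ⟨x, hxΓ, hx⟩ := line_fst Γ p hint _ hmem
      have h1 : x.1 ≤ w₂.1 := hw₂ hxΓ
      have h2 : w₂.1 ≤ max p.1 w₂.1 := le_max_right _ _
      simp only [hcc] at hx
      rw [hx] at h1
      linarith
    obtain ⟨s₁, hs₁I, hs₁Γ⟩ := cross1
    obtain ⟨s₂, hs₂I, hs₂Γ⟩ := cross2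
    have hs₁ne : s₁ ≠ p.1 := by
      intro h; rw [h, hcp] at hs₁Γ; exact hpΓ hs₁Γ
    have hs₂ne : s₂ ≠ p.1 := by
      intro h; rw [h, hcp] at hs₂Γ; exact hpΓ hs₂Γ
    refine ⟨s₁, s₂, ?_, lt_of_le_of_ne hs₁I.2 hs₁ne, lt_of_le_of_ne hs₂I.1 (Ne.symm hs₂ne),
      hs₁Γ, hs₂Γ⟩
    exact lt_of_lt_of_le (lt_min (by linarith) (by linarith)) hs₁I.1
  · -- case u.2 = 0
    intro _
    set cc : ℝ → ℝ × ℝ := fun t => (p.1, t) with hcc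
    have hcp : cc p.2 = p := rfl
    have hccont : ∀ a b : ℝ, ContinuousOn cc (Set.Icc a b) :=
      fun a' b' => (continuous_const.prodMk continuous_id).continuousOn
    have hccQ : ∀ a b : ℝ, 0 < a → ∀ t ∈ Set.Icc a b, cc t ∈ Q :=
      fun a' b' ha' t ht => ⟨hp.1, lt_of_lt_of_le ha' ht.1⟩
    have cross1 : ∃ t ∈ Set.Icc (min (p.2 / 2) (w₃.2 / 2)) p.2, cc t ∈ Γ := by
      have hapos : 0 < min (p.2 / 2) (w₃.2 / 2) := lt_min (by linarith) (by linarith)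
      have hab : min (p.2 / 2) (w₃.2 / 2) ≤ p.2 :=
        le_trans (min_le_left _ _) (by linarith)
      refine cross_aux Q Γ p cc _ _ (hccont _ _) (hccQ _ _ hapos)
        p.2 ⟨hab, le_rfl⟩ hcp (min (p.2 / 2) (w₃.2 / 2)) ⟨le_rfl, hab⟩ ?_
      intro hmem
      obtain ⟨x, hxΓ, hx⟩ := line_snd Γ p hint _ hmem
      have h1 : w₃.2 ≤ x.2 := hw₃ hxΓ
      have h2 : min (p.2 / 2) (w₃.2 / 2) ≤ w₃.2 / 2 := min_le_right _ _
      simp only [hcc] at hx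
      rw [hx] at h1
      linarith
    have cross2 : ∃ t ∈ Set.Icc p.2 (max p.2 w₄.2 + 1), cc t ∈ Γ := by
      have hab : p.2 ≤ max p.2 w₄.2 + 1 := le_trans (le_max_left _ _) (by linarith)
      refine cross_aux Q Γ p cc _ _ (hccont _ _) (hccQ _ _ hp.2)
        p.2 ⟨le_rfl, hab⟩ hcp (max p.2 w₄.2 + 1) ⟨hab, le_rfl⟩ ?_
      intro hmem
      obtain ⟨x, hxΓ, hx⟩ := line_snd Γ p hint _ hmem
      have h1 : x.2 ≤ w₄.2 := hw₄ hxΓ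
      have h2 : w₄.2 ≤ max p.2 w₄.2 := le_max_right _ _
      simp only [hcc] at hx
      rw [hx] at h1
      linarith
    obtain ⟨s₁, hs₁I, hs₁Γ⟩ := cross1
    obtain ⟨s₂, hs₂I, hs₂Γ⟩ := cross2
    have hs₁ne : s₁ ≠ p.2 := by
      intro h; rw [h, hcp] at hs₁Γ; exact hpΓ hs₁Γ
    have hs₂ne : s₂ ≠ p.2 := by
      intro h; rw [h, hcp] at hs₂Γ; exact hpΓ hs₂Γ
    refine ⟨s₁, s₂, ?_, lt_of_le_of_ne hs₁I.2 hs₁ne, lt_of_le_of_ne hs₂I.1 (Ne.symm hs₂ne),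
      hs₁Γ, hs₂Γ⟩
    exact lt_of_lt_of_le (lt_min (by linarith) (by linarith)) hs₁I.1
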